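/- Assume Λ_s ≠ Λ_ℓ. Let p : Φ̊ → Y be ℤ-linear with p(α) ∈ Λ_s for every α ∈ Φ̊_s and p(α) ∈ Λ_ℓ for every α ∈ Φ̊_ℓ, and let S be maximal among subsets T of the subgroup ⟨Λ_s⟩ generated by Λ_s such that: T is a union of cosets of Λ_ℓ, 0 ∈ T, p(α) + T ⊆ Λ_s for every α ∈ Φ̊_s, and p(α) + T ≠ Λ_s for every α ∈ Φ̊_s. Then Ψ := {(α, p(α)+s) : α ∈ Φ̊_s, s ∈ S} ∪ {(α,λ) : α ∈ Φ̊_ℓ, λ ∈ Λ_ℓ} is a maximal root subsystem of Φ. -/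

import Mathlib

open RealInnerProductSpace

noncomputable section

/-- The standard basis vector `e i` of `ℝ^n`. -/
def ee (n : ℕ) (i : Fin n) : EuclideanSpace ℝ (Fin n) := EuclideanSpace.single i 1

/-- The set `{±e_i : 1 ≤ i ≤ n}`. -/
def pmE (n : ℕ) : Set (EuclideanSpace ℝ (Fin n)) :=
  {v | ∃ i : Fin n, v = ee n i ∨ v = -ee n i}

/-- The set `{±e_i ± e_j : i ≠ j}`. -/
def pmEE (n : ℕ) : Set (EuclideanSpace ℝ (Fin n)) :=
  {v | ∃ i j : Fin n, i ≠ j ∧ ∃ ε δ : ℝ, (ε = 1 ∨ ε = -1) ∧ (δ = 1 ∨ δ = -1) ∧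
    v = ε • ee n i + δ • ee n j}

/-- The set `{±2e_i : 1 ≤ i ≤ n}`. -/
def pm2E (n : ℕ) : Set (EuclideanSpace ℝ (Fin n)) :=
  {v | ∃ i : Fin n, v = (2 : ℝ) • ee n i ∨ v = -((2 : ℝ) • ee n i)}

/-- The reflection `s_α(β) = β − (2⟨β,α⟩/⟨α,α⟩)α`. -/
def reflV {V : Type*} [NormedAddCommGroup V] [InnerProductSpace ℝ V] (α β : V) : V :=
  β - (2 * ⟪β, α⟫ / ⟪α, α⟫) • α

/-- A root subsystem of `Φ` (w.r.t. a given reflection map): a nonempty subset of `Φ`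
closed under the reflections in its own elements. -/
def IsRootSubsystem {X : Type*} (refl : X → X → X) (Φ Ψ : Set X) : Prop :=
  Ψ.Nonempty ∧ Ψ ⊆ Φ ∧ ∀ a ∈ Ψ, ∀ b ∈ Ψ, refl a b ∈ Ψ

/-- A maximal root subsystem of `Φ`: a proper root subsystem such that every root
subsystem `Ψ'` with `Ψ ⊆ Ψ' ≠ Φ` equals `Ψ`. -/
def IsMaximalRootSubsystem {X : Type*} (refl : X → X → X) (Φ Ψ : Set X) : Prop :=
  IsRootSubsystem refl Φ Ψ ∧ Ψ ≠ Φ ∧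
    ∀ Ψ' : Set X, IsRootSubsystem refl Φ Ψ' → Ψ ⊆ Ψ' → Ψ' ≠ Φ → Ψ' = Ψ

/-- The affine reflection `s_a(b) = b − (2⟨b₁,a₁⟩/⟨a₁,a₁⟩)·a` on `V × Y`. -/
def reflA {V Y : Type*} [NormedAddCommGroup V] [InnerProductSpace ℝ V]
    [AddCommGroup Y] [Module ℝ Y] (a b : V × Y) : V × Y :=
  b - (2 * ⟪b.1, a.1⟫ / ⟪a.1, a.1⟫) • a

/-- `p : Φ̊ → Y` is ℤ-linear: `p(s_α(β)) = p(β) − (2⟨β,α⟩/⟨α,α⟩)·p(α)` for `α, β ∈ Φ̊`. -/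
def IsZLin {V Y : Type*} [NormedAddCommGroup V] [InnerProductSpace ℝ V]
    [AddCommGroup Y] [Module ℝ Y] (Φ₀ : Set V) (p : V → Y) : Prop :=
  ∀ α ∈ Φ₀, ∀ β ∈ Φ₀, p (reflV α β) = p β - (2 * ⟪β, α⟫ / ⟪α, α⟫) • p α

/-- The property of the subsets `T ⊆ ⟨Λ_s⟩` among which `S` is maximal in STATEMENT 8:
`T` is a union of cosets of `Λ_ℓ`, `0 ∈ T`, and `p(α) + T ⊆ Λ_s` and `p(α) + T ≠ Λ_s`
for every short root `α`. -/
def BGoodT (n : ℕ) {Y : Type*} [AddCommGroup Y]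
    (Λs : Set Y) (Λℓ : AddSubgroup Y) (p : EuclideanSpace ℝ (Fin n) → Y)
    (T : Set Y) : Prop :=
  T ⊆ (AddSubgroup.closure Λs : Set Y) ∧
  (0 : Y) ∈ T ∧
  (∀ t ∈ T, ∀ h ∈ Λℓ, t + h ∈ T) ∧
  (∀ α ∈ pmE n, ∀ t ∈ T, p α + t ∈ Λs) ∧
  (∀ α ∈ pmE n, {y | ∃ t ∈ T, y = p α + t} ≠ Λs)

lemma inner_ee {n : ℕ} (i j : Fin n) : ⟪ee n i, ee n j⟫ = if i = j then (1:ℝ) else 0 := by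
  simp [ee, EuclideanSpace.inner_single_left, EuclideanSpace.single_apply, eq_comm]

lemma mem_pmE_iff {n : ℕ} {v : EuclideanSpace ℝ (Fin n)} :
    v ∈ pmE n ↔ ∃ i : Fin n, ∃ ε : ℝ, (ε = 1 ∨ ε = -1) ∧ v = ε • ee n i := by
  constructor
  · rintro ⟨i, rfl | rfl⟩
    · exact ⟨i, 1, Or.inl rfl, by module⟩
    · exact ⟨i, -1, Or.inr rfl, by module⟩
  · rintro ⟨i, ε, (rfl|rfl), rfl⟩
    · exact ⟨i, Or.inl (by module)⟩
    · exact ⟨i, Or.inr (by module)⟩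

lemma neg_mem_pmE {n : ℕ} {v : EuclideanSpace ℝ (Fin n)} (h : v ∈ pmE n) : -v ∈ pmE n := by
  obtain ⟨i, rfl | rfl⟩ := h
  · exact ⟨i, Or.inr rfl⟩
  · exact ⟨i, Or.inl (neg_neg _)⟩

lemma mem_pmEE_mk {n : ℕ} (i j : Fin n) (hij : i ≠ j) (ε δ : ℝ) (hε : ε = 1 ∨ ε = -1)
    (hδ : δ = 1 ∨ δ = -1) {v : EuclideanSpace ℝ (Fin n)}
    (hv : v = ε • ee n i + δ • ee n j) : v ∈ pmEE n := ⟨i, j, hij, ε, δ, hε, hδ, hv⟩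

lemma pmE_disjoint {n : ℕ} {v : EuclideanSpace ℝ (Fin n)} (h1 : v ∈ pmE n)
    (h2 : v ∈ pmEE n) : False := by
  rw [mem_pmE_iff] at h1
  obtain ⟨m, ε, hε, rfl⟩ := h1
  obtain ⟨i, j, hij, ε₁, δ₁, hε₁, hδ₁, hv⟩ := h2
  have hi : ⟪ee n i, (ε • ee n m : EuclideanSpace ℝ (Fin n))⟫ = ε₁ := by
    rw [hv]
    simp only [inner_add_right, real_inner_smul_right, inner_ee, if_pos rfl,
      if_neg hij, if_neg hij.symm]
    norm_num
  have hj : ⟪ee n j, (ε • ee n m : EuclideanSpace ℝ (Fin n))⟫ = δ₁ := by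
    rw [hv]
    simp only [inner_add_right, real_inner_smul_right, inner_ee, if_pos rfl,
      if_neg hij, if_neg hij.symm]
    norm_num
  rcases eq_or_ne i m with rfl | him
  · rw [real_inner_smul_right, inner_ee, if_neg hij.symm] at hj
    rcases hδ₁ with rfl|rfl <;> norm_num at hj
  · rw [real_inner_smul_right, inner_ee, if_neg him] at hi
    rcases hε₁ with rfl|rfl <;> norm_num at hi

lemma refl_short_short {n : ℕ} {α β : EuclideanSpace ℝ (Fin n)} (hα : α ∈ pmE n)
    (hβ : β ∈ pmE n) :
    2 * ⟪β, α⟫ / ⟪α, α⟫ = 0 ∨ (2 * ⟪β, α⟫ / ⟪α, α⟫ = 2 ∧ β = α) ∨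
      (2 * ⟪β, α⟫ / ⟪α, α⟫ = -2 ∧ β = -α) := by
  obtain ⟨i, hi⟩ := hα; obtain ⟨j, hj⟩ := hβ
  rcases eq_or_ne j i with rfl | hij
  · rcases hi with rfl | rfl <;> rcases hj with rfl | rfl
    · refine Or.inr (Or.inl ⟨?_, rfl⟩)
      simp only [inner_ee, if_pos rfl]; norm_num
    · refine Or.inr (Or.inr ⟨?_, rfl⟩)
      simp only [inner_neg_left, inner_neg_right, inner_ee, if_pos rfl]; norm_num
    · refine Or.inr (Or.inr ⟨?_, (neg_neg _).symm⟩)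
      simp only [inner_neg_left, inner_neg_right, inner_ee, if_pos rfl]; norm_num
    · refine Or.inr (Or.inl ⟨?_, rfl⟩)
      simp only [inner_neg_left, inner_neg_right, inner_ee, if_pos rfl]; norm_num
  · left
    rcases hi with rfl | rfl <;> rcases hj with rfl | rfl <;>
      · simp only [inner_neg_left, inner_neg_right, inner_ee, if_neg hij]; norm_num

lemma refl_short_long {n : ℕ} {α β : EuclideanSpace ℝ (Fin n)} (hα : α ∈ pmE n)
    (hβ : β ∈ pmEE n) :
    ∃ c : ℝ, 2 * ⟪β, α⟫ / ⟪α, α⟫ = c ∧ (c = 0 ∨ c = 2 ∨ c = -2) ∧ β - c • α ∈ pmEE n := by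
  rw [mem_pmE_iff] at hα
  obtain ⟨m, ε, hε, rfl⟩ := hα
  obtain ⟨i, j, hij, ε₁, δ₁, hε₁, hδ₁, rfl⟩ := hβ
  rcases eq_or_ne m i with rfl | hmi
  · refine ⟨2 * (ε₁ * ε), ?_, ?_, mem_pmEE_mk m j hij (-ε₁) δ₁ ?_ hδ₁ ?_⟩
    · rcases hε with rfl | rfl <;>
        · simp only [inner_add_left, real_inner_smul_left, real_inner_smul_right, inner_ee]
          simp [hij, hij.symm]
    · rcases hε₁ with rfl|rfl <;> rcases hε with rfl|rfl <;> norm_num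
    · rcases hε₁ with rfl|rfl <;> norm_num
    · rcases hε with rfl|rfl <;> module
  · rcases eq_or_ne m j with rfl | hmj
    · refine ⟨2 * (δ₁ * ε), ?_, ?_, mem_pmEE_mk i m hij ε₁ (-δ₁) hε₁ ?_ ?_⟩
      · rcases hε with rfl | rfl <;>
          · simp only [inner_add_left, real_inner_smul_left, real_inner_smul_right, inner_ee]
            simp [hij, hij.symm]
      · rcases hδ₁ with rfl|rfl <;> rcases hε with rfl|rfl <;> norm_num
      · rcases hδ₁ with rfl|rfl <;> norm_num
      · rcases hε with rfl|rfl <;> module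
    · refine ⟨0, ?_, Or.inl rfl, mem_pmEE_mk i j hij ε₁ δ₁ hε₁ hδ₁ (by module)⟩
      simp only [inner_add_left, real_inner_smul_left, real_inner_smul_right, inner_ee]
      simp [hmi, hmj, Ne.symm hmi, Ne.symm hmj]

lemma refl_long_short {n : ℕ} {α β : EuclideanSpace ℝ (Fin n)} (hα : α ∈ pmEE n)
    (hβ : β ∈ pmE n) :
    ∃ c : ℝ, 2 * ⟪β, α⟫ / ⟪α, α⟫ = c ∧ (c = 0 ∨ c = 1 ∨ c = -1) ∧ β - c • α ∈ pmE n := by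
  obtain ⟨k, l, hkl, ε₂, δ₂, hε₂, hδ₂, rfl⟩ := hα
  rw [mem_pmE_iff] at hβ
  obtain ⟨m, δ, hδ, rfl⟩ := hβ
  rcases eq_or_ne m k with rfl | hmk
  · refine ⟨δ * ε₂, ?_, ?_, mem_pmE_iff.mpr ⟨l, -(δ * ε₂ * δ₂), ?_, ?_⟩⟩
    · rcases hδ with rfl|rfl <;> rcases hε₂ with rfl|rfl <;> rcases hδ₂ with rfl|rfl <;>
        · simp only [inner_add_left, inner_add_right, real_inner_smul_left,
            real_inner_smul_right, inner_ee]
          simp [hkl, hkl.symm]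
          try norm_num
    · rcases hδ with rfl|rfl <;> rcases hε₂ with rfl|rfl <;> norm_num
    · rcases hδ with rfl|rfl <;> rcases hε₂ with rfl|rfl <;> rcases hδ₂ with rfl|rfl <;> norm_num
    · rcases hε₂ with rfl|rfl <;> module
  · rcases eq_or_ne m l with rfl | hml
    · refine ⟨δ * δ₂, ?_, ?_, mem_pmE_iff.mpr ⟨k, -(δ * δ₂ * ε₂), ?_, ?_⟩⟩
      · rcases hδ with rfl|rfl <;> rcases hε₂ with rfl|rfl <;> rcases hδ₂ with rfl|rfl <;>
          · simp only [inner_add_left, inner_add_right, real_inner_smul_left,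
              real_inner_smul_right, inner_ee]
            simp [hkl, hkl.symm, hmk, Ne.symm hmk]
            try norm_num
      · rcases hδ with rfl|rfl <;> rcases hδ₂ with rfl|rfl <;> norm_num
      · rcases hδ with rfl|rfl <;> rcases hε₂ with rfl|rfl <;> rcases hδ₂ with rfl|rfl <;> norm_num
      · rcases hδ₂ with rfl|rfl <;> module
    · refine ⟨0, ?_, Or.inl rfl, mem_pmE_iff.mpr ⟨m, δ, hδ, by module⟩⟩
      simp only [inner_add_left, inner_add_right, real_inner_smul_left,
        real_inner_smul_right, inner_ee]
      simp [hmk, hml]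

lemma refl_long_long {n : ℕ} {α β : EuclideanSpace ℝ (Fin n)} (hα : α ∈ pmEE n)
    (hβ : β ∈ pmEE n) :
    ∃ c : ℝ, 2 * ⟪β, α⟫ / ⟪α, α⟫ = c ∧ (c = 0 ∨ c = 1 ∨ c = -1 ∨ c = 2 ∨ c = -2) ∧
      β - c • α ∈ pmEE n := by
  obtain ⟨i, j, hij, ε₁, δ₁, hε₁, hδ₁, rfl⟩ := hβ
  obtain ⟨k, l, hkl, ε₂, δ₂, hε₂, hδ₂, rfl⟩ := hα
  rcases eq_or_ne i k with rfl | hik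
  · rcases eq_or_ne j l with rfl | hjl
    · -- P5 : same index pair, aligned
      refine ⟨ε₁ * ε₂ + δ₁ * δ₂, ?_, ?_,
        mem_pmEE_mk i j hij (-(δ₁*δ₂*ε₂)) (-(ε₁*ε₂*δ₂)) ?_ ?_ ?_⟩
      · rcases hε₂ with rfl|rfl <;> rcases hδ₂ with rfl|rfl <;>
          · simp only [inner_add_left, inner_add_right, real_inner_smul_left,
              real_inner_smul_right, inner_ee]
            simp [hij, hij.symm]
            try ring
      · rcases hε₁ with rfl|rfl <;> rcases hδ₁ with rfl|rfl <;> rcases hε₂ with rfl|rfl <;>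
          rcases hδ₂ with rfl|rfl <;> norm_num
      · rcases hδ₁ with rfl|rfl <;> rcases hδ₂ with rfl|rfl <;> rcases hε₂ with rfl|rfl <;> norm_num
      · rcases hε₁ with rfl|rfl <;> rcases hε₂ with rfl|rfl <;> rcases hδ₂ with rfl|rfl <;> norm_num
      · rcases hε₂ with rfl|rfl <;> rcases hδ₂ with rfl|rfl <;> module
    · -- P1 : i = k only
      refine ⟨ε₁ * ε₂, ?_, ?_, mem_pmEE_mk j l hjl δ₁ (-(ε₁*ε₂*δ₂)) hδ₁ ?_ ?_⟩
      · rcases hε₂ with rfl|rfl <;> rcases hδ₂ with rfl|rfl <;>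
          · simp only [inner_add_left, inner_add_right, real_inner_smul_left,
              real_inner_smul_right, inner_ee]
            simp [hij, hij.symm, hkl, hkl.symm, hjl, hjl.symm]
            try ring
      · rcases hε₁ with rfl|rfl <;> rcases hε₂ with rfl|rfl <;> norm_num
      · rcases hε₁ with rfl|rfl <;> rcases hε₂ with rfl|rfl <;> rcases hδ₂ with rfl|rfl <;> norm_num
      · rcases hε₂ with rfl|rfl <;> module
  · rcases eq_or_ne i l with rfl | hil
    · rcases eq_or_ne j k with rfl | hjk
      · -- P6 : same index pair, crossed : α = ε₂ • e_j + δ₂ • e_i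
        refine ⟨ε₁ * δ₂ + δ₁ * ε₂, ?_, ?_,
          mem_pmEE_mk i j hij (-(δ₁*ε₂*δ₂)) (-(ε₁*δ₂*ε₂)) ?_ ?_ ?_⟩
        · rcases hε₂ with rfl|rfl <;> rcases hδ₂ with rfl|rfl <;>
            · simp only [inner_add_left, inner_add_right, real_inner_smul_left,
                real_inner_smul_right, inner_ee]
              simp [hij, hij.symm, hkl, hkl.symm]
              try ring
        · rcases hε₁ with rfl|rfl <;> rcases hδ₁ with rfl|rfl <;> rcases hε₂ with rfl|rfl <;>
            rcases hδ₂ with rfl|rfl <;> norm_num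
        · rcases hδ₁ with rfl|rfl <;> rcases hε₂ with rfl|rfl <;> rcases hδ₂ with rfl|rfl <;> norm_num
        · rcases hε₁ with rfl|rfl <;> rcases hε₂ with rfl|rfl <;> rcases hδ₂ with rfl|rfl <;> norm_num
        · rcases hε₂ with rfl|rfl <;> rcases hδ₂ with rfl|rfl <;> module
      · -- P2 : i = l only : α = ε₂ • e_k + δ₂ • e_i
        refine ⟨ε₁ * δ₂, ?_, ?_, mem_pmEE_mk j k hjk δ₁ (-(ε₁*δ₂*ε₂)) hδ₁ ?_ ?_⟩
        · rcases hε₂ with rfl|rfl <;> rcases hδ₂ with rfl|rfl <;>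
            · simp only [inner_add_left, inner_add_right, real_inner_smul_left,
                real_inner_smul_right, inner_ee]
              simp [hij, hij.symm, hkl, hkl.symm, hik, Ne.symm hik, hjk, Ne.symm hjk]
              try ring
        · rcases hε₁ with rfl|rfl <;> rcases hδ₂ with rfl|rfl <;> norm_num
        · rcases hε₁ with rfl|rfl <;> rcases hε₂ with rfl|rfl <;> rcases hδ₂ with rfl|rfl <;> norm_num
        · rcases hδ₂ with rfl|rfl <;> module
    · rcases eq_or_ne j k with rfl | hjk
      · -- P3 : j = k only : α = ε₂ • e_j + δ₂ • e_l
        refine ⟨δ₁ * ε₂, ?_, ?_, mem_pmEE_mk i l hil ε₁ (-(δ₁*ε₂*δ₂)) hε₁ ?_ ?_⟩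
        · rcases hε₂ with rfl|rfl <;> rcases hδ₂ with rfl|rfl <;>
            · simp only [inner_add_left, inner_add_right, real_inner_smul_left,
                real_inner_smul_right, inner_ee]
              simp [hij, hij.symm, hkl, hkl.symm, hik, Ne.symm hik, hil, Ne.symm hil]
              try ring
        · rcases hδ₁ with rfl|rfl <;> rcases hε₂ with rfl|rfl <;> norm_num
        · rcases hδ₁ with rfl|rfl <;> rcases hε₂ with rfl|rfl <;> rcases hδ₂ with rfl|rfl <;> norm_num
        · rcases hε₂ with rfl|rfl <;> module
      · rcases eq_or_ne j l with rfl | hjl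
        · -- P4 : j = l only : α = ε₂ • e_k + δ₂ • e_j
          refine ⟨δ₁ * δ₂, ?_, ?_, mem_pmEE_mk i k hik ε₁ (-(δ₁*δ₂*ε₂)) hε₁ ?_ ?_⟩
          · rcases hε₂ with rfl|rfl <;> rcases hδ₂ with rfl|rfl <;>
              · simp only [inner_add_left, inner_add_right, real_inner_smul_left,
                  real_inner_smul_right, inner_ee]
                simp [hij, hij.symm, hkl, hkl.symm, hik, Ne.symm hik, hjk, Ne.symm hjk,
                  hil, Ne.symm hil]
                try ring
          · rcases hδ₁ with rfl|rfl <;> rcases hδ₂ with rfl|rfl <;> norm_num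
          · rcases hδ₁ with rfl|rfl <;> rcases hε₂ with rfl|rfl <;> rcases hδ₂ with rfl|rfl <;> norm_num
          · rcases hδ₂ with rfl|rfl <;> module
        · -- P0 : disjoint indices
          refine ⟨0, ?_, Or.inl rfl, mem_pmEE_mk i j hij ε₁ δ₁ hε₁ hδ₁ (by module)⟩
          simp only [inner_add_left, inner_add_right, real_inner_smul_left,
            real_inner_smul_right, inner_ee]
          simp [hik, hil, hjk, hjl]

lemma reflA_mk {V Y : Type*} [NormedAddCommGroup V] [InnerProductSpace ℝ V]
    [AddCommGroup Y] [Module ℝ Y] (α β : V) (lam mu : Y) :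
    reflA (α, lam) (β, mu) = (β - (2*⟪β,α⟫/⟪α,α⟫) • α, mu - (2*⟪β,α⟫/⟪α,α⟫) • lam) := rfl

/-- gradient `B_n`, `n ≥ 2`: if `Λ_s ≠ Λ_ℓ`, `p` is ℤ-linear with the
appropriate values, and `S` is maximal among the subsets described by `BGoodT`, then
`Ψ = {(α, p(α)+s) : α short, s ∈ S} ∪ (Φ̊_ℓ ⊕ Λ_ℓ)` is a maximal root subsystem. -/
theorem stmt_8 (n : ℕ) (hn : 2 ≤ n) (Y : Type*) [AddCommGroup Y] [Module ℝ Y]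
    [FiniteDimensional ℝ Y]
    (Λℓ : AddSubgroup Y) (Λs : Set Y)
    (h0s : (0 : Y) ∈ Λs) (hsneg : ∀ x ∈ Λs, -x ∈ Λs)
    (hsl : ∀ x ∈ Λs, ∀ h ∈ Λℓ, x + h ∈ Λs)
    (h2s : ∀ x ∈ Λs, 2 • x ∈ Λℓ)
    (hspan : Submodule.span ℝ Λs = ⊤)
    (Φ : Set (EuclideanSpace ℝ (Fin n) × Y))
    (hΦ : Φ = {x | x.1 ∈ pmE n ∧ x.2 ∈ Λs} ∪ {x | x.1 ∈ pmEE n ∧ x.2 ∈ Λℓ})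
    (hne : Λs ≠ (Λℓ : Set Y))
    (p : EuclideanSpace ℝ (Fin n) → Y)
    (hlin : IsZLin (pmE n ∪ pmEE n) p)
    (hps : ∀ α ∈ pmE n, p α ∈ Λs)
    (hpl : ∀ α ∈ pmEE n, p α ∈ Λℓ)
    (S : Set Y) (hS : BGoodT n Λs Λℓ p S)
    (hSmax : ∀ T : Set Y, BGoodT n Λs Λℓ p T → S ⊆ T → T = S)
    (Ψ : Set (EuclideanSpace ℝ (Fin n) × Y))
    (hΨ : Ψ = {x | ∃ α ∈ pmE n, ∃ s ∈ S, x = (α, p α + s)} ∪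
      {x | x.1 ∈ pmEE n ∧ x.2 ∈ Λℓ}) :
    IsMaximalRootSubsystem reflA Φ Ψ := by
  subst hΦ hΨ
  obtain ⟨hS1, hS0, hSst, hSΛ, hSne⟩ := hS
  haveI : Nontrivial (Fin n) := ⟨⟨0, by omega⟩, ⟨1, by omega⟩, by simp [Fin.ext_iff]⟩
  set i₀ : Fin n := ⟨0, by omega⟩ with hi₀
  have hα₀ : ee n i₀ ∈ pmE n := ⟨i₀, Or.inl rfl⟩
  -- basic lattice facts
  have h2s' : ∀ x ∈ Λs, x + x ∈ Λℓ := by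
    intro x hx; have := h2s x hx; rwa [two_smul] at this
  have h2cl : ∀ x ∈ AddSubgroup.closure Λs, x + x ∈ Λℓ := by
    intro x hx
    induction hx using AddSubgroup.closure_induction with
    | mem y hy => exact h2s' y hy
    | zero => simpa using zero_mem Λℓ
    | add a b _ _ ha hb =>
        rw [show a + b + (a + b) = (a + a) + (b + b) by abel]; exact add_mem ha hb
    | neg a _ ha => rw [show -a + -a = -(a + a) by abel]; exact neg_mem ha
  have hcY : ∀ c : ℝ, (c = 0 ∨ c = 1 ∨ c = -1 ∨ c = 2 ∨ c = -2) → ∀ x ∈ Λℓ, c • x ∈ Λℓ := by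
    rintro c (rfl|rfl|rfl|rfl|rfl) x hx
    · simpa using zero_mem Λℓ
    · simpa using hx
    · rw [show ((-1:ℝ)) • x = -x by module]; exact neg_mem hx
    · rw [show ((2:ℝ)) • x = x + x by module]; exact add_mem hx hx
    · rw [show ((-2:ℝ)) • x = -(x + x) by module]; exact neg_mem (add_mem hx hx)
  have hcY2 : ∀ c : ℝ, (c = 0 ∨ c = 2 ∨ c = -2) → ∀ x : Y, x + x ∈ Λℓ → c • x ∈ Λℓ := by
    rintro c (rfl|rfl|rfl) x hx
    · simpa using zero_mem Λℓ
    · rw [show ((2:ℝ)) • x = x + x by module]; exact hx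
    · rw [show ((-2:ℝ)) • x = -(x + x) by module]; exact neg_mem hx
  -- facts about p
  have hpneg : ∀ v ∈ pmE n, p (-v) = - p v := by
    intro v hv
    have h1 : ⟪v, v⟫ = (1:ℝ) := by
      rw [mem_pmE_iff] at hv; obtain ⟨i, ε, hε, rfl⟩ := hv
      rcases hε with rfl|rfl <;>
        · simp only [real_inner_smul_left, real_inner_smul_right, inner_ee, if_pos rfl]
          norm_num
    have h2 : (2 * ⟪v, v⟫ / ⟪v, v⟫ : ℝ) = 2 := by rw [h1]; norm_num
    have h := hlin v (Or.inl hv) v (Or.inl hv)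
    simp only [reflV] at h
    rw [h2] at h
    rw [show v - (2:ℝ) • v = -v by module] at h
    rw [h]; module
  have hpdiff : ∀ v ∈ pmE n, ∀ w ∈ pmE n, p v - p w ∈ Λℓ := by
    intro v hv w hw
    have hv' := hv; have hw' := hw
    rw [mem_pmE_iff] at hv' hw'
    obtain ⟨i, ε, hε, hv1⟩ := hv'
    obtain ⟨j, δ, hδ, hw1⟩ := hw'
    rcases eq_or_ne i j with rfl | hij
    · rcases hε with rfl|rfl <;> rcases hδ with rfl|rfl
      · rw [hv1, hw1, sub_self]; exact zero_mem _
      · have : w = -v := by rw [hv1, hw1]; module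
        rw [this, hpneg v hv, sub_neg_eq_add]; exact h2s' _ (hps v hv)
      · have : w = -v := by rw [hv1, hw1]; module
        rw [this, hpneg v hv, sub_neg_eq_add]; exact h2s' _ (hps v hv)
      · rw [hv1, hw1, sub_self]; exact zero_mem _
    · -- γ := v - w is a long root and reflects v to w
      have hγ : v - w ∈ pmEE n := by
        rw [hv1, hw1]
        exact mem_pmEE_mk i j hij ε (-δ)  hε
          (by rcases hδ with rfl|rfl <;> norm_num) (by module)
      have hc : (2 * ⟪v, v - w⟫ / ⟪v - w, v - w⟫ : ℝ) = 1 := by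
        rw [hv1, hw1]
        rcases hε with rfl|rfl <;> rcases hδ with rfl|rfl <;>
          · simp only [inner_sub_left, inner_sub_right, real_inner_smul_left,
              real_inner_smul_right, inner_ee]
            simp [hij, hij.symm]
            try norm_num
      have h := hlin (v - w) (Or.inr hγ) v (Or.inl hv)
      simp only [reflV] at h
      rw [hc] at h
      rw [show v - (1:ℝ) • (v - w) = w by module] at h
      rw [show p v - p w = p (v - w) by rw [h]; module]
      exact hpl _ hγ
  -- Ψ is a root subsystem
  have hΨsubΦ : ({x | ∃ α ∈ pmE n, ∃ s ∈ S, x = (α, p α + s)} ∪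
      {x : EuclideanSpace ℝ (Fin n) × Y | x.1 ∈ pmEE n ∧ x.2 ∈ Λℓ}) ⊆
      ({x | x.1 ∈ pmE n ∧ x.2 ∈ Λs} ∪ {x | x.1 ∈ pmEE n ∧ x.2 ∈ Λℓ}) := by
    rintro x (⟨α, hα, s, hs, rfl⟩ | ⟨h1, h2⟩)
    · exact Or.inl ⟨hα, hSΛ α hα s hs⟩
    · exact Or.inr ⟨h1, h2⟩
  have hclos : ∀ a ∈ ({x | ∃ α ∈ pmE n, ∃ s ∈ S, x = (α, p α + s)} ∪
      {x : EuclideanSpace ℝ (Fin n) × Y | x.1 ∈ pmEE n ∧ x.2 ∈ Λℓ}),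
      ∀ b ∈ ({x | ∃ α ∈ pmE n, ∃ s ∈ S, x = (α, p α + s)} ∪
      {x : EuclideanSpace ℝ (Fin n) × Y | x.1 ∈ pmEE n ∧ x.2 ∈ Λℓ}), reflA a b ∈
      ({x | ∃ α ∈ pmE n, ∃ s ∈ S, x = (α, p α + s)} ∪
      {x : EuclideanSpace ℝ (Fin n) × Y | x.1 ∈ pmEE n ∧ x.2 ∈ Λℓ}) := by
    rintro ⟨α, lam⟩ ha ⟨β, mu⟩ hb
    rcases ha with ⟨α', hα', s, hs, heqa⟩ | ⟨hα1, hlm1⟩ <;>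
      rcases hb with ⟨β', hβ', t, ht, heqb⟩ | ⟨hβ1, hmu1⟩
    · -- short-short
      injection heqa with e1 e2; subst e1; subst e2
      injection heqb with e3 e4; subst e3; subst e4
      rcases refl_short_short hα' hβ' with hc | ⟨hc, hβα⟩ | ⟨hc, hβα⟩
      · left
        refine ⟨β, hβ', t, ht, ?_⟩
        rw [reflA_mk, hc]
        simp
      · subst hβα
        left
        refine ⟨-β, neg_mem_pmE hβ', t + -(s + s), hSst t ht _ (neg_mem (h2cl s (hS1 hs))), ?_⟩
        rw [reflA_mk, hc, Prod.mk.injEq]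
        refine ⟨by module, ?_⟩
        rw [hpneg β hβ']
        module
      · subst hβα
        left
        refine ⟨α, hα', t + (s + s), hSst t ht _ (h2cl s (hS1 hs)), ?_⟩
        rw [reflA_mk, hc, Prod.mk.injEq]
        refine ⟨by module, ?_⟩
        rw [hpneg α hα']
        module
    · -- short-long
      injection heqa with e1 e2; subst e1; subst e2
      obtain ⟨c, hc, hcv, hmem⟩ := refl_short_long hα' hβ1
      right
      rw [reflA_mk, hc]
      refine ⟨hmem, ?_⟩
      refine sub_mem hmu1 ?_
      rw [smul_add]
      exact add_mem (hcY2 c hcv _ (h2s' _ (hps α hα'))) (hcY2 c hcv _ (h2cl s (hS1 hs)))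
    · -- long-short
      injection heqb with e3 e4; subst e3; subst e4
      obtain ⟨c, hc, hcv, hmem⟩ := refl_long_short hα1 hβ'
      have hp' : p (β - c • α) = p β - c • p α := by
        have h := hlin α (Or.inr hα1) β (Or.inl hβ')
        simp only [reflV] at h
        rw [hc] at h
        exact h
      left
      refine ⟨β - c • α, hmem, t + (c • p α - c • lam),
        hSst t ht _ (sub_mem (hcY c (by tauto) _ (hpl α hα1)) (hcY c (by tauto) _ hlm1)), ?_⟩
      rw [reflA_mk, hc, Prod.mk.injEq]
      refine ⟨rfl, ?_⟩
      rw [hp']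
      abel
    · -- long-long
      obtain ⟨c, hc, hcv, hmem⟩ := refl_long_long hα1 hβ1
      right
      rw [reflA_mk, hc]
      exact ⟨hmem, sub_mem hmu1 (hcY c hcv _ hlm1)⟩
  refine ⟨⟨⟨(ee n i₀, p (ee n i₀) + 0), Or.inl ⟨_, hα₀, 0, hS0, rfl⟩⟩, hΨsubΦ, hclos⟩, ?_, ?_⟩
  · -- Ψ ≠ Φ
    intro hEQ
    have hpr : {y | ∃ t ∈ S, y = p (ee n i₀) + t} ⊆ Λs := by
      rintro y ⟨t, ht, rfl⟩; exact hSΛ _ hα₀ t ht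
    obtain ⟨lam, hlam, hlam'⟩ :=
      Set.exists_of_ssubset (ssubset_of_subset_of_ne hpr (hSne _ hα₀))
    have hmem : (ee n i₀, lam) ∈ ({x | ∃ α ∈ pmE n, ∃ s ∈ S, x = (α, p α + s)} ∪
        {x : EuclideanSpace ℝ (Fin n) × Y | x.1 ∈ pmEE n ∧ x.2 ∈ Λℓ}) := by
      rw [hEQ]; exact Or.inl ⟨hα₀, hlam⟩
    rcases hmem with ⟨α, hα, s, hs, heq⟩ | ⟨h1, h2⟩
    · injection heq with e1 e2
      subst e1
      exact hlam' ⟨s, hs, e2⟩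
    · exact pmE_disjoint hα₀ h1
  · -- maximality
    intro Ψ' hΨ'sys hΨsub hΨ'ne
    obtain ⟨-, hΨ'Φ, hclosed⟩ := hΨ'sys
    -- moving between short roots inside Ψ'
    have hmove2 : ∀ (i j : Fin n), i ≠ j → ∀ ε δ : ℝ, (ε = 1 ∨ ε = -1) → (δ = 1 ∨ δ = -1) →
        ∀ (μ lam : Y), lam ∈ Λℓ → (ε • ee n i, μ) ∈ Ψ' → (δ • ee n j, μ - lam) ∈ Ψ' := by
      intro i j hij ε δ hε hδ μ lam hlam hv
      have hγ : (ε • ee n i - δ • ee n j : EuclideanSpace ℝ (Fin n)) ∈ pmEE n :=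
        mem_pmEE_mk i j hij ε (-δ) hε (by rcases hδ with rfl|rfl <;> norm_num) (by module)
      have hγΨ : ((ε • ee n i - δ • ee n j : EuclideanSpace ℝ (Fin n)), lam) ∈ Ψ' :=
        hΨsub (Or.inr ⟨hγ, hlam⟩)
      have h2 := hclosed _ hγΨ _ hv
      rw [reflA_mk] at h2
      have hc : (2 * ⟪(ε • ee n i : EuclideanSpace ℝ (Fin n)), ε • ee n i - δ • ee n j⟫ /
          ⟪(ε • ee n i - δ • ee n j : EuclideanSpace ℝ (Fin n)),
            ε • ee n i - δ • ee n j⟫ : ℝ) = 1 := by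
        rcases hε with rfl|rfl <;> rcases hδ with rfl|rfl <;>
          · simp only [inner_sub_left, inner_sub_right, real_inner_smul_left,
              real_inner_smul_right, inner_ee]
            simp [hij, hij.symm]
            try norm_num
      rw [hc] at h2
      rw [show (ε • ee n i : EuclideanSpace ℝ (Fin n)) - (1:ℝ) • (ε • ee n i - δ • ee n j)
        = δ • ee n j by module] at h2
      rwa [one_smul] at h2
    have hmove1 : ∀ (i j : Fin n), i ≠ j → ∀ ε δ : ℝ, (ε = 1 ∨ ε = -1) → (δ = 1 ∨ δ = -1) →
        ∀ μ : Y, (ε • ee n i, μ) ∈ Ψ' → (δ • ee n j, μ) ∈ Ψ' := by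
      intro i j hij ε δ hε hδ μ hv
      have := hmove2 i j hij ε δ hε hδ μ 0 (zero_mem _) hv
      rwa [sub_zero] at this
    have hmove : ∀ v ∈ pmE n, ∀ w ∈ pmE n, ∀ μ : Y, (v, μ) ∈ Ψ' → (w, μ) ∈ Ψ' := by
      intro v hv w hw μ h
      rw [mem_pmE_iff] at hv hw
      obtain ⟨i, ε, hε, rfl⟩ := hv
      obtain ⟨j, δ, hδ, rfl⟩ := hw
      rcases eq_or_ne i j with rfl | hij
      · obtain ⟨k, hk⟩ := exists_ne i
        exact hmove1 k i hk 1 δ (Or.inl rfl) hδ μ (hmove1 i k (Ne.symm hk) ε 1 hε (Or.inl rfl) μ h)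
      · exact hmove1 i j hij ε δ hε hδ μ h
    have hshift : ∀ v ∈ pmE n, ∀ μ : Y, (v, μ) ∈ Ψ' → ∀ h ∈ Λℓ, (v, μ + h) ∈ Ψ' := by
      intro v hv μ hm h hh
      have hv' := hv
      rw [mem_pmE_iff] at hv'
      obtain ⟨i, ε, hε, rfl⟩ := hv'
      obtain ⟨j, hj⟩ := exists_ne i
      have h1 := hmove2 i j (Ne.symm hj) ε 1 hε (Or.inl rfl) μ (-h) (neg_mem hh) hm
      rw [sub_neg_eq_add] at h1
      exact hmove1 j i hj 1 ε (Or.inl rfl) hε _ h1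
    -- the set T
    set T : Set Y := {t | ∀ w ∈ pmE n, (w, p w + t) ∈ Ψ'} with hTdef
    have hTS : S ⊆ T := by
      intro s hs w hw
      exact hΨsub (Or.inl ⟨w, hw, s, hs, rfl⟩)
    have hTstab : ∀ t ∈ T, ∀ h ∈ Λℓ, t + h ∈ T := by
      intro t ht h hh w hw
      have := hshift w hw _ (ht w hw) h hh
      rwa [add_assoc] at this
    have hmemT : ∀ v ∈ pmE n, ∀ μ : Y, (v, μ) ∈ Ψ' → μ - p v ∈ T := by
      intro v hv μ hm w hw
      have h1 := hmove v hv w hw μ hm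
      have h2 := hshift w hw μ h1 (p w - p v) (hpdiff w hw v hv)
      rwa [show μ + (p w - p v) = p w + (μ - p v) by abel] at h2
    have hTΛs : ∀ α ∈ pmE n, ∀ t ∈ T, p α + t ∈ Λs := by
      intro α hα t ht
      rcases hΨ'Φ (ht α hα) with ⟨-, h2⟩ | ⟨h1, -⟩
      · exact h2
      · exact (pmE_disjoint hα h1).elim
    have hTgood : BGoodT n Λs Λℓ p T := by
      refine ⟨?_, hTS hS0, hTstab, hTΛs, ?_⟩
      · intro t ht
        have h2 := hTΛs _ hα₀ t ht
        have := AddSubgroup.sub_mem (AddSubgroup.closure Λs)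
          (AddSubgroup.subset_closure h2) (AddSubgroup.subset_closure (hps _ hα₀))
        rwa [add_sub_cancel_left] at this
      · intro α hα hEQ
        apply hΨ'ne
        apply Set.Subset.antisymm hΨ'Φ
        rintro ⟨v, μ⟩ (⟨h1, h2⟩ | ⟨h1, h2⟩)
        · have hμ : μ ∈ {y | ∃ t ∈ T, y = p α + t} := by rw [hEQ]; exact h2
          obtain ⟨t, ht, rfl⟩ := hμ
          have ht' : t + (p α - p v) ∈ T := hTstab t ht _ (hpdiff α hα v h1)
          have h3 := ht' v h1
          rwa [show p v + (t + (p α - p v)) = p α + t by abel] at h3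
        · exact hΨsub (Or.inr ⟨h1, h2⟩)
    have hTeq : T = S := hSmax T hTgood hTS
    apply Set.Subset.antisymm _ hΨsub
    rintro ⟨v, μ⟩ hx
    rcases hΨ'Φ hx with ⟨h1, h2⟩ | ⟨h1, h2⟩
    · left
      have hT := hmemT v h1 μ hx
      rw [hTeq] at hT
      exact ⟨v, h1, μ - p v, hT, by rw [Prod.mk.injEq]; exact ⟨rfl, by abel⟩⟩
    · exact Or.inr ⟨h1, h2⟩
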